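/- arXiv:2212.07368 — 4 statements merged into one kernel-verified Lean document; each statement's English description precedes it below -/
import Mathlib

section
/- Let E ∈ C^{N×K} be generic and Q a binary diagonal N × N matrix with r nonzero entries. If K ≤ max{r, N − r}, then the relation [[Q, I−Q],[I−Q, Q]] · diag(E,E) · (β₁'', β₂'') = diag(E,E) · (β₁', β₂') implies either (β₁' = β₁'' and β₂' = β₂'') or (β₁' = β₂'' and β₂' = β₁''). -/
open Matrix

/-- A tall N×K matrix is generic if every K×K row-submatrix is invertible. -/
def IsGeneric (N K : ℕ) (E : Matrix (Fin N) (Fin K) ℂ) : Prop :=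
  ∀ f : Fin K → Fin N, Function.Injective f → IsUnit (E.submatrix f id).det

lemma generic_zero (N K : ℕ) (E : Matrix (Fin N) (Fin K) ℂ) (hE : IsGeneric N K E)
    (S : Finset (Fin N)) (hS : K ≤ S.card) (x : Fin K → ℂ)
    (hx : ∀ i ∈ S, (E *ᵥ x) i = 0) : x = 0 := by
  obtain ⟨T, hTS, hT⟩ := Finset.exists_subset_card_eq hS
  set f : Fin K → Fin N := fun j => T.orderIsoOfFin hT j
  have hf : Function.Injective f := fun a b hab => by
    have := (T.orderIsoOfFin hT).injective (Subtype.ext hab); exact this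
  have hu := hE f hf
  have hinj := Matrix.mulVec_injective_iff_isUnit.mpr (isUnit_iff_isUnit_det _ |>.mpr hu)
  have h0 : (E.submatrix f id) *ᵥ x = 0 := by
    funext j
    have : (E *ᵥ x) (f j) = 0 := hx _ (hTS (T.orderIsoOfFin hT j).2)
    simpa [Matrix.submatrix_mulVec_equiv, Matrix.mulVec, Matrix.submatrix,
      dotProduct] using this
  have h0' : (E.submatrix f id) *ᵥ x = (E.submatrix f id) *ᵥ 0 := by
    rw [h0, Matrix.mulVec_zero]
  exact hinj h0'

/-- two-channel uniqueness. With E generic, Q binary diagonal with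
r nonzero entries, and K ≤ max(r, N−r), the relation
[[Q, I−Q],[I−Q, Q]] diag(E,E) β'' = diag(E,E) β' forces the two channel
solutions to agree up to a swap. -/
theorem stmt6 (N K : ℕ) (E : Matrix (Fin N) (Fin K) ℂ) (hE : IsGeneric N K E)
    (q : Fin N → ℂ) (hbin : ∀ i, q i = 0 ∨ q i = 1)
    (hK : K ≤ max ((Finset.univ.filter fun i => q i ≠ 0).card)
                  (N - (Finset.univ.filter fun i => q i ≠ 0).card))
    (β₁' β₂' β₁'' β₂'' : Fin K → ℂ)
    (h1 : Matrix.diagonal q *ᵥ (E *ᵥ β₁'') + (1 - Matrix.diagonal q) *ᵥ (E *ᵥ β₂'')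
            = E *ᵥ β₁')
    (h2 : (1 - Matrix.diagonal q) *ᵥ (E *ᵥ β₁'') + Matrix.diagonal q *ᵥ (E *ᵥ β₂'')
            = E *ᵥ β₂') :
    (β₁' = β₁'' ∧ β₂' = β₂'') ∨ (β₁' = β₂'' ∧ β₂' = β₁'') := by
  set S : Finset (Fin N) := Finset.univ.filter fun i => q i ≠ 0 with hSdef
  have h1' : ∀ i, q i * (E *ᵥ β₁'') i + (1 - q i) * (E *ᵥ β₂'') i = (E *ᵥ β₁') i := by
    intro i
    have := congrFun h1 i
    rw [Pi.add_apply, Matrix.sub_mulVec, Matrix.one_mulVec, Pi.sub_apply,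
      Matrix.mulVec_diagonal, Matrix.mulVec_diagonal] at this
    linear_combination this
  have h2' : ∀ i, (1 - q i) * (E *ᵥ β₁'') i + q i * (E *ᵥ β₂'') i = (E *ᵥ β₂') i := by
    intro i
    have := congrFun h2 i
    rw [Pi.add_apply, Matrix.sub_mulVec, Matrix.one_mulVec, Pi.sub_apply,
      Matrix.mulVec_diagonal, Matrix.mulVec_diagonal] at this
    linear_combination this
  rcases le_max_iff.mp hK with hc | hc
  · left
    constructor
    · have := generic_zero N K E hE S hc (β₁' - β₁'') ?_
      · exact sub_eq_zero.mp this
      intro i hi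
      have hq : q i = 1 := (hbin i).resolve_left (by simpa [hSdef] using hi)
      have := h1' i
      rw [hq] at this
      simp only [Matrix.mulVec_sub, Pi.sub_apply]
      simp at this
      linear_combination -this
    · have := generic_zero N K E hE S hc (β₂' - β₂'') ?_
      · exact sub_eq_zero.mp this
      intro i hi
      have hq : q i = 1 := (hbin i).resolve_left (by simpa [hSdef] using hi)
      have := h2' i
      rw [hq] at this
      simp only [Matrix.mulVec_sub, Pi.sub_apply]
      simp at this
      linear_combination -this
  · right
    have hcompl : K ≤ Sᶜ.card := by
      have : Sᶜ.card = N - S.card := by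
        rw [Finset.card_compl, Fintype.card_fin]
      omega
    constructor
    · have := generic_zero N K E hE Sᶜ hcompl (β₁' - β₂'') ?_
      · exact sub_eq_zero.mp this
      intro i hi
      have hq : q i = 0 := by
        have : i ∉ S := Finset.mem_compl.mp hi
        simpa [hSdef] using this
      have := h1' i
      rw [hq] at this
      simp only [Matrix.mulVec_sub, Pi.sub_apply]
      simp at this
      linear_combination -this
    · have := generic_zero N K E hE Sᶜ hcompl (β₂' - β₁'') ?_
      · exact sub_eq_zero.mp this
      intro i hi
      have hq : q i = 0 := by
        have : i ∉ S := Finset.mem_compl.mp hi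
        simpa [hSdef] using this
      have := h2' i
      rw [hq] at this
      simp only [Matrix.mulVec_sub, Pi.sub_apply]
      simp at this
      linear_combination -this
end

section
/- Let E ∈ C^{N×K} and Q a binary diagonal N × N matrix with r nonzero entries. If K > max{r, N − r} and the column space 𝓔 of E intersects both ker(ϱ) and ker(ϱ^⊥) nontrivially (where ϱ is multiplication by Q and ϱ^⊥ by I − Q), then there exist vectors x₁', x₂', x₁'', x₂'' in 𝓔 with x₁' = Q x₁'' + (I−Q) x₂'' and x₂' = (I−Q) x₁'' + Q x₂'', but x₁' ≠ x₁'' and x₁' ≠ x₂''. -/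
open Matrix

/-- when K > max(r, N−r) and the column space 𝓔 of E intersects
both ker(ϱ) and ker(ϱ^⊥) nontrivially, there are vectors in 𝓔 satisfying the
two-channel shuffling relations that do not agree: non-uniqueness. -/
theorem stmt7 (N K : ℕ) (E : Matrix (Fin N) (Fin K) ℂ)
    (q : Fin N → ℂ) (hbin : ∀ i, q i = 0 ∨ q i = 1)
    (hK : K > max ((Finset.univ.filter fun i => q i ≠ 0).card)
                  (N - (Finset.univ.filter fun i => q i ≠ 0).card))
    (h1 : ∃ x ∈ LinearMap.range (Matrix.toLin' E),
            x ≠ 0 ∧ Matrix.diagonal q *ᵥ x = 0)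
    (h2 : ∃ x ∈ LinearMap.range (Matrix.toLin' E),
            x ≠ 0 ∧ (1 - Matrix.diagonal q) *ᵥ x = 0) :
    ∃ x₁' x₂' x₁'' x₂'' : Fin N → ℂ,
      x₁' ∈ LinearMap.range (Matrix.toLin' E) ∧
      x₂' ∈ LinearMap.range (Matrix.toLin' E) ∧
      x₁'' ∈ LinearMap.range (Matrix.toLin' E) ∧
      x₂'' ∈ LinearMap.range (Matrix.toLin' E) ∧
      x₁' = Matrix.diagonal q *ᵥ x₁'' + (1 - Matrix.diagonal q) *ᵥ x₂'' ∧
      x₂' = (1 - Matrix.diagonal q) *ᵥ x₁'' + Matrix.diagonal q *ᵥ x₂'' ∧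
      x₁' ≠ x₁'' ∧ x₁' ≠ x₂'' := by
  obtain ⟨u, hu, hun, hQu⟩ := h1
  obtain ⟨v, hv, hvn, hPv⟩ := h2
  have hQv : Matrix.diagonal q *ᵥ v = v := by
    have := hPv
    rw [Matrix.sub_mulVec, Matrix.one_mulVec, sub_eq_zero] at this
    exact this.symm
  have hPu : (1 - Matrix.diagonal q) *ᵥ u = u := by
    rw [Matrix.sub_mulVec, Matrix.one_mulVec, hQu, sub_zero]
  refine ⟨0, u + v, u, v, Submodule.zero_mem _, Submodule.add_mem _ hu hv, hu, hv,
    ?_, ?_, ?_, ?_⟩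
  · rw [hQu, hPv, add_zero]
  · rw [hPu, hQv]
  · exact fun h => hun h.symm
  · exact fun h => hvn h.symm
end

section
/- Let E ∈ C^{N×K} be generic with column space 𝓔, M ≥ 2, N ≥ M K, and let {Q_{mn}}_{m,n=1}^M be binary diagonal N × N matrices with ∑_{m=1}^M Q_{mn} = I and ∑_{n=1}^M Q_{mn} = I. Let x_m' = E β_m' and x_m'' = E β_m'' with all β_m' distinct. If x_m' = ∑_{n=1}^M Q_{mn} x_n'' for every m, then there exists a permutation σ of {1,…,M} such that x_m' = x_{σ(m)}'' for all m. -/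
open Matrix

private lemma binary_sum_card {ι : Type*} (s : Finset ι) (f : ι → ℂ)
    (hb : ∀ i ∈ s, f i = 0 ∨ f i = 1) :
    ∑ i ∈ s, f i = ((s.filter (fun i => f i = 1)).card : ℂ) := by
  classical
  rw [Finset.card_filter]
  push_cast
  refine Finset.sum_congr rfl fun i hi => ?_
  rcases hb i hi with h | h <;> simp [h]

/-- cross-channel unlabeled sensing. Under a generic E, N ≥ MK,
and structured binary diagonal blocks, any two explanations of the shuffled
data agree up to a renaming of the channels. -/
theorem stmt9 (N K M : ℕ) (hM : 2 ≤ M) (hN : M * K ≤ N)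
    (E : Matrix (Fin N) (Fin K) ℂ) (hE : IsGeneric N K E)
    (q : Fin M → Fin M → Fin N → ℂ)
    (hbin : ∀ m n p, q m n p = 0 ∨ q m n p = 1)
    (hcol : ∀ n, ∑ m, Matrix.diagonal (q m n) = (1 : Matrix (Fin N) (Fin N) ℂ))
    (hrow : ∀ m, ∑ n, Matrix.diagonal (q m n) = (1 : Matrix (Fin N) (Fin N) ℂ))
    (β' β'' : Fin M → Fin K → ℂ)
    (hdist : ∀ κ lam, κ ≠ lam → β' κ ≠ β' lam)
    (hrel : ∀ m, E *ᵥ β' m = ∑ n, Matrix.diagonal (q m n) *ᵥ (E *ᵥ β'' n)) :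
    ∃ σ : Equiv.Perm (Fin M), ∀ m, E *ᵥ β' m = E *ᵥ β'' (σ m) := by
  classical
  -- Step A: pointwise, each row of x'_m matches a row of some x''_n
  have key : ∀ m p, ∃ n, (E *ᵥ β' m) p = (E *ᵥ β'' n) p := by
    intro m p
    have hsum : ∑ n, q m n p = 1 := by
      have := congrFun (congrFun (hrow m) p) p
      simpa [Matrix.sum_apply, Matrix.one_apply] using this
    have hcard : ((Finset.univ.filter (fun n => q m n p = 1)).card : ℂ) = 1 := by
      rw [← binary_sum_card _ _ (fun n _ => hbin m n p)]; exact hsum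
    have hcard' : (Finset.univ.filter (fun n => q m n p = 1)).card = 1 := by
      exact_mod_cast hcard
    obtain ⟨n₀, hn₀⟩ := Finset.card_eq_one.mp hcard'
    have hq₀ : q m n₀ p = 1 := by
      have : n₀ ∈ Finset.univ.filter (fun n => q m n p = 1) := by
        rw [hn₀]; exact Finset.mem_singleton_self _
      exact (Finset.mem_filter.mp this).2
    have hz : ∀ n, n ≠ n₀ → q m n p = 0 := by
      intro n hn
      rcases hbin m n p with h | h
      · exact h
      · exfalso
        have : n ∈ Finset.univ.filter (fun n => q m n p = 1) := by
          simp [h]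
        rw [hn₀, Finset.mem_singleton] at this
        exact hn this
    refine ⟨n₀, ?_⟩
    have := congrFun (hrel m) p
    rw [this]
    rw [Finset.sum_apply]
    rw [Finset.sum_eq_single n₀]
    · simp [Matrix.mulVec_diagonal, hq₀]
    · intro n _ hn
      simp [Matrix.mulVec_diagonal, hz n hn]
    · simp
  choose nf hnf using key
  -- Step B: for each m, obtain n with β' m = β'' n
  have main : ∀ m, ∃ n, β' m = β'' n := by
    intro m
    -- pigeonhole
    have hpig : ∃ n, K ≤ (Finset.univ.filter fun p => nf m p = n).card := by
      by_contra h
      push_neg at h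
      have h1 : (Finset.univ : Finset (Fin N)).card =
          ∑ n : Fin M, (Finset.univ.filter fun p => nf m p = n).card :=
        Finset.card_eq_sum_card_fiberwise (fun p _ => Finset.mem_univ _)
      have h2 : ∑ n : Fin M, (Finset.univ.filter fun p => nf m p = n).card ≤
          ∑ _n : Fin M, (K - 1) :=
        Finset.sum_le_sum fun n _ => Nat.le_sub_one_of_lt (h n)
      rw [Finset.sum_const, Finset.card_univ, Fintype.card_fin, smul_eq_mul] at h2
      rw [Finset.card_univ, Fintype.card_fin] at h1
      have hK : 0 < K := by
        rcases Nat.eq_zero_or_pos K with h0 | h0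
        · subst h0; exact absurd (h ⟨0, by omega⟩) (Nat.not_lt_zero _)
        · exact h0
      have := Nat.mul_le_mul_left M (Nat.sub_le K 1)
      nlinarith [h1, h2, hN, Nat.sub_lt hK one_pos]
    obtain ⟨n, hn⟩ := hpig
    obtain ⟨t, hts, htc⟩ := Finset.exists_subset_card_eq hn
    set f : Fin K → Fin N := fun i => (t.orderIsoOfFin htc i : Fin N) with hf
    have hfi : Function.Injective f := fun i j hij => by
      have := (t.orderIsoOfFin htc).injective (Subtype.ext hij)
      exact this
    refine ⟨n, ?_⟩
    have hunit : IsUnit (E.submatrix f id).det := hE f hfi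
    have hinj : Function.Injective (E.submatrix f id).mulVec :=
      Matrix.mulVec_injective_iff_isUnit.mpr ((Matrix.isUnit_iff_isUnit_det _).mpr hunit)
    apply hinj
    funext i
    have hsub : ∀ v : Fin K → ℂ, (E.submatrix f id *ᵥ v) i = (E *ᵥ v) (f i) := by
      intro v; simp [Matrix.mulVec, dotProduct, Matrix.submatrix_apply]
    rw [hsub, hsub]
    have hmem : f i ∈ t := (t.orderIsoOfFin htc i).2
    have : nf m (f i) = n := (Finset.mem_filter.mp (hts hmem)).2
    rw [← this]
    exact hnf m (f i)
  choose g hg using main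
  have hginj : Function.Injective g := by
    intro m1 m2 h
    by_contra hne
    exact hdist m1 m2 hne (by rw [hg m1, hg m2, h])
  refine ⟨Equiv.ofBijective g (Finite.injective_iff_bijective.mp hginj), fun m => ?_⟩
  simp only [Equiv.ofBijective_apply]
  rw [hg m]
end

section
/- Let W be the N × N matrix with entries W_{ip} = ω^{ip}, ω = exp(2πj/N), and let V be an N × K Vandermonde matrix with entries V_{pk} = v_k^p, where the v_k ∈ C are pairwise distinct and v_k^N ≠ ±1 for all k, and K ≤ N. Then every K × K submatrix of W V obtained by selecting K rows is invertible; i.e., W V is a generic matrix. -/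
open Matrix Complex Polynomial Finset


open Matrix Complex

/-- W V is generic, where W is the N×N IDFT matrix
(W_{ip} = ω^{ip}, ω = exp(2πi/N)) and V the N×K Vandermonde matrix with
pairwise distinct nodes v_k satisfying v_k^N ≠ ±1. -/
theorem stmt13 (N K : ℕ) (hK : K ≤ N) (v : Fin K → ℂ)
    (hdist : Function.Injective v)
    (hvN : ∀ k, (v k) ^ N ≠ 1 ∧ (v k) ^ N ≠ -1) :
    IsGeneric N K
      ((Matrix.of fun i p : Fin N =>
          (Complex.exp (2 * Real.pi * Complex.I / N)) ^ ((i : ℕ) * (p : ℕ))) *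
       (Matrix.of fun (p : Fin N) (k : Fin K) => (v k) ^ (p : ℕ))) := by
  intro f hf
  rcases Nat.eq_zero_or_pos K with rfl | hKpos
  · simp [Matrix.det_isEmpty]
  have hN : 0 < N := lt_of_lt_of_le hKpos hK
  set ω : ℂ := Complex.exp (2 * Real.pi * Complex.I / N) with hω
  have hprim : IsPrimitiveRoot ω N := Complex.isPrimitiveRoot_exp N hN.ne'
  have hωN : ω ^ N = 1 := hprim.pow_eq_one
  have hωne : ω ≠ 0 := Complex.exp_ne_zero _
  have hden : ∀ (i : Fin K) (k : Fin K), ω ^ (f i : ℕ) * v k - 1 ≠ 0 := by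
    intro i k h
    have h1 : ω ^ (f i : ℕ) * v k = 1 := by linear_combination h
    have : (ω ^ (f i : ℕ) * v k) ^ N = 1 := by rw [h1]; ring
    rw [mul_pow, ← pow_mul, mul_comm (f i : ℕ) N, pow_mul, hωN, one_pow, one_mul] at this
    exact (hvN k).1 this
  have hentry : ∀ (i : Fin K) (k : Fin K),
      (((Matrix.of fun i p : Fin N => ω ^ ((i : ℕ) * (p : ℕ))) *
       (Matrix.of fun (p : Fin N) (k : Fin K) => (v k) ^ (p : ℕ))).submatrix f id) i k
      = ((v k) ^ N - 1) / (ω ^ (f i : ℕ) * v k - 1) := by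
    intro i k
    have hne : ω ^ (f i : ℕ) * v k ≠ 1 := fun h => hden i k (by rw [h]; ring)
    simp only [Matrix.submatrix_apply, Matrix.mul_apply, Matrix.of_apply, id]
    calc ∑ p : Fin N, ω ^ ((f i : ℕ) * (p : ℕ)) * v k ^ (p : ℕ)
        = ∑ p : Fin N, (ω ^ (f i : ℕ) * v k) ^ (p : ℕ) := by
          refine Finset.sum_congr rfl fun p _ => ?_
          rw [mul_pow, pow_mul]
      _ = ∑ p ∈ Finset.range N, (ω ^ (f i : ℕ) * v k) ^ p := Fin.sum_univ_eq_sum_range _ N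
      _ = ((ω ^ (f i : ℕ) * v k) ^ N - 1) / (ω ^ (f i : ℕ) * v k - 1) := geom_sum_eq hne N
      _ = ((v k) ^ N - 1) / (ω ^ (f i : ℕ) * v k - 1) := by
          rw [mul_pow, ← pow_mul, mul_comm (f i : ℕ) N, pow_mul, hωN, one_pow, one_mul]
  rw [isUnit_iff_ne_zero]
  intro hdet
  obtain ⟨c, hc, hMc⟩ := (Matrix.exists_mulVec_eq_zero_iff).2 hdet
  set y : Fin K → ℂ := fun i => (ω ^ (f i : ℕ))⁻¹ with hy
  have hYc : ∀ i : Fin K, ω ^ (f i : ℕ) * y i = 1 :=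
    fun i => mul_inv_cancel₀ (pow_ne_zero _ hωne)
  have hy_inj : Function.Injective y := by
    intro i j h
    apply hf
    have : ω ^ (f i : ℕ) = ω ^ (f j : ℕ) := by
      have := congrArg (·⁻¹) h
      simpa [hy] using this
    exact Fin.ext (hprim.pow_inj (f i).isLt (f j).isLt this)
  have hy_ne : ∀ i k, y i - v k ≠ 0 := by
    intro i k h
    apply hden i k
    have hvk : v k = y i := by linear_combination -h
    rw [hvk]
    linear_combination hYc i
  have hker : ∀ i : Fin K, ∑ k, ((v k) ^ N - 1) / (ω ^ (f i : ℕ) * v k - 1) * c k = 0 := by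
    intro i
    have h0 := congrFun hMc i
    simp only [Matrix.mulVec, dotProduct, Pi.zero_apply] at h0
    rw [← h0]
    exact Finset.sum_congr rfl fun k _ => by rw [hentry i k]
  set Q : Polynomial ℂ :=
    ∑ k, Polynomial.C (c k * ((v k) ^ N - 1)) * ∏ j ∈ Finset.univ.erase k,
      (X - Polynomial.C (v j)) with hQ
  have hQdeg : Q.natDegree < K := by
    have hle : Q.natDegree ≤ K - 1 := by
      apply Polynomial.natDegree_sum_le_of_forall_le
      intro k _
      calc (Polynomial.C (c k * ((v k) ^ N - 1)) * ∏ j ∈ Finset.univ.erase k,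
              (X - Polynomial.C (v j))).natDegree
          ≤ (Polynomial.C (c k * ((v k) ^ N - 1))).natDegree +
            (∏ j ∈ Finset.univ.erase k, (X - Polynomial.C (v j))).natDegree :=
            Polynomial.natDegree_mul_le
        _ ≤ 0 + (K - 1) := by
            gcongr
            · exact le_of_eq (Polynomial.natDegree_C _)
            · refine le_trans (Polynomial.natDegree_prod_le _ _) ?_
              simp [Polynomial.natDegree_X_sub_C, Finset.card_erase_of_mem]
        _ = K - 1 := by omega
    omega
  have hQeval : ∀ i, Q.eval (y i) = 0 := by
    intro i
    have key : Q.eval (y i)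
        = (-(ω ^ (f i : ℕ)) * ∏ j, (y i - v j)) *
          ∑ k, ((v k) ^ N - 1) / (ω ^ (f i : ℕ) * v k - 1) * c k := by
      rw [hQ, Polynomial.eval_finset_sum, Finset.mul_sum]
      refine Finset.sum_congr rfl fun k _ => ?_
      rw [Polynomial.eval_mul, Polynomial.eval_C, Polynomial.eval_prod]
      simp only [Polynomial.eval_sub, Polynomial.eval_X, Polynomial.eval_C]
      rw [← Finset.mul_prod_erase Finset.univ (fun j => y i - v j) (Finset.mem_univ k)]
      have h1 : -(ω ^ (f i : ℕ)) * (y i - v k) = ω ^ (f i : ℕ) * v k - 1 := by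
        linear_combination -(hYc i)
      rw [eq_comm, ← h1]
      have he : (ω ^ (f i : ℕ) : ℂ) ≠ 0 := pow_ne_zero _ hωne
      have hik := hy_ne i k
      field_simp
    rw [key, hker i, mul_zero]
  have hQ0 : Q = 0 := by
    apply Polynomial.eq_zero_of_natDegree_lt_card_of_eval_eq_zero Q hy_inj hQeval
    simpa using hQdeg
  apply hc
  funext k
  have hev := congrArg (Polynomial.eval (v k)) hQ0
  rw [hQ, Polynomial.eval_finset_sum] at hev
  simp only [Polynomial.eval_mul, Polynomial.eval_C, Polynomial.eval_prod, Polynomial.eval_sub,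
    Polynomial.eval_X, Polynomial.eval_zero] at hev
  rw [Finset.sum_eq_single k] at hev
  · have hprod : (∏ j ∈ Finset.univ.erase k, (v k - v j)) ≠ 0 := by
      apply Finset.prod_ne_zero_iff.2
      intro j hj
      have hjk : j ≠ k := Finset.ne_of_mem_erase hj
      exact sub_ne_zero_of_ne fun h => hjk (hdist h.symm)
    rcases mul_eq_zero.1 hev with h | h
    · rcases mul_eq_zero.1 h with h' | h'
      · exact h'
      · exact absurd (by linear_combination h' : (v k) ^ N = 1) (hvN k).1
    · exact absurd h hprod
  · intro j _ hjk
    apply mul_eq_zero_of_right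
    exact Finset.prod_eq_zero (Finset.mem_erase.2 ⟨hjk.symm, Finset.mem_univ k⟩) (sub_self _)
  · intro h; exact absurd (Finset.mem_univ k) h
end
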